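/- Let d ≥ 1, λ > 0, σ > 0, 0 ≤ x ≤ L, and define T(x) = (1/(λ^(d/2) σ²)) ∫ₓᴸ z^(1-d) e^(λ z²) γ(d/2, λ z²) dz. Then T(x) ≥ ((1 + 2/d)/(2λσ²)) · ( exp(2λL²/(d+2)) − exp(2λx²/(d+2)) ). -/

import Mathlib

noncomputable def lowerGamma (a x : ℝ) : ℝ := ∫ t in (0:ℝ)..x, t ^ (a - 1) * Real.exp (-t)

noncomputable def mfet (d : ℕ) (lam σ x L : ℝ) : ℝ :=
  (1 / (lam ^ ((d : ℝ) / 2) * σ ^ 2)) *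
    ∫ z in x..L, z ^ ((1 : ℝ) - d) * Real.exp (lam * z ^ 2) * lowerGamma ((d : ℝ) / 2) (lam * z ^ 2)

open MeasureTheory intervalIntegral Set

lemma lowerGamma_integrand_integrable {a : ℝ} (ha : 0 < a) (p q : ℝ) :
    IntervalIntegrable (fun t => t ^ (a - 1) * Real.exp (-t)) volume p q :=
  (intervalIntegral.intervalIntegrable_rpow' (by linarith)).mul_continuousOn
    (Continuous.continuousOn (by continuity))

lemma lowerGamma_continuous {a : ℝ} (ha : 0 < a) : Continuous (lowerGamma a) :=
  intervalIntegral.continuous_primitive (fun p q => lowerGamma_integrand_integrable ha p q) 0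

lemma lowerGamma_nonneg {a : ℝ} (ha : 0 < a) {y : ℝ} (hy : 0 ≤ y) : 0 ≤ lowerGamma a y := by
  apply intervalIntegral.integral_nonneg hy
  intro t ht
  exact mul_nonneg (Real.rpow_nonneg ht.1 _) (Real.exp_pos _).le

lemma lowerGamma_le {a : ℝ} (ha : 0 < a) {y : ℝ} (hy : 0 ≤ y) :
    lowerGamma a y ≤ y ^ a / a := by
  have h1 : lowerGamma a y ≤ ∫ t in (0:ℝ)..y, t ^ (a - 1) := by
    apply intervalIntegral.integral_mono_on hy (lowerGamma_integrand_integrable ha 0 y)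
      (intervalIntegral.intervalIntegrable_rpow' (by linarith))
    intro t ht
    have h0 : (0:ℝ) ≤ t ^ (a - 1) := Real.rpow_nonneg ht.1 _
    nlinarith [Real.exp_le_one_iff.mpr (neg_nonpos.mpr ht.1), Real.exp_pos (-t)]
  have h2 : ∫ t in (0:ℝ)..y, t ^ (a - 1) = y ^ a / a := by
    rw [integral_rpow (Or.inl (by linarith))]
    rw [Real.zero_rpow (by linarith : a - 1 + 1 ≠ 0)]
    ring_nf
  linarith [h1, h2.ge, h2.le]

/-- The key lower bound on the lower incomplete Gamma function. -/
lemma lowerGamma_ge {a : ℝ} (ha : 0 < a) {y : ℝ} (hy : 0 ≤ y) :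
    (1 / a) * y ^ a * Real.exp (-(a / (a + 1)) * y) ≤ lowerGamma a y := by
  set c : ℝ := a / (a + 1) with hc
  have ha1 : (0:ℝ) < a + 1 := by linarith
  have hc0 : 0 < c := div_pos ha ha1
  have hca : c / a = 1 / (a + 1) := by rw [hc]; field_simp
  set G : ℝ → ℝ := fun t => (1 / a) * t ^ a * Real.exp (-c * t) with hG
  set g : ℝ → ℝ := fun t => t ^ (a - 1) * Real.exp (-c * t)
      - (c / a) * (t ^ a * Real.exp (-c * t)) with hg
  have hGcont : Continuous G := by
    apply Continuous.mul
    · apply Continuous.mul continuous_const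
      exact Real.continuous_rpow_const ha.le
    · exact (continuous_const.mul continuous_id).rexp
  have hderiv : ∀ t ∈ Ioo (0:ℝ) y, HasDerivAt G (g t) t := by
    intro t ht
    have h1 : HasDerivAt (fun t : ℝ => t ^ a) (a * t ^ (a - 1)) t :=
      Real.hasDerivAt_rpow_const (Or.inl (ne_of_gt ht.1))
    have h2 : HasDerivAt (fun t : ℝ => Real.exp (-c * t)) (-c * Real.exp (-c * t)) t := by
      have := ((hasDerivAt_id t).const_mul (-c)).exp
      simpa [mul_comm] using this
    have h3 := ((h1.const_mul (1 / a)).mul h2)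
    refine h3.congr_deriv ?_
    simp only [hg, hG]
    field_simp
    ring
  have hgint : IntervalIntegrable g volume 0 y := by
    apply IntervalIntegrable.sub
    · exact (intervalIntegral.intervalIntegrable_rpow' (by linarith)).mul_continuousOn
        (Continuous.continuousOn (by continuity))
    · apply ContinuousOn.intervalIntegrable
      apply Continuous.continuousOn
      exact continuous_const.mul ((Real.continuous_rpow_const ha.le).mul
        ((continuous_const.mul continuous_id).rexp))
  have hftc : ∫ t in (0:ℝ)..y, g t = G y - G 0 :=
    intervalIntegral.integral_eq_sub_of_hasDeriv_right_of_le hy hGcont.continuousOn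
      (fun t ht => (hderiv t ht).hasDerivWithinAt) hgint
  have hG0 : G 0 = 0 := by
    simp [hG, Real.zero_rpow (ne_of_gt ha)]
  have hmono : ∫ t in (0:ℝ)..y, g t ≤ lowerGamma a y := by
    apply intervalIntegral.integral_mono_on hy hgint (lowerGamma_integrand_integrable ha 0 y)
    intro t ht
    rcases eq_or_lt_of_le ht.1 with h0 | h0
    · simp [hg, ← h0, Real.zero_rpow (ne_of_gt ha)]
    · have hta : t ^ a = t ^ (a - 1) * t := by
        rw [← Real.rpow_add_one (ne_of_gt h0)]; ring_nf
      have hkey : Real.exp (-c * t) * (1 - t / (a + 1)) ≤ Real.exp (-t) := by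
        have h4 : 1 - t / (a + 1) ≤ Real.exp (-(t / (a + 1))) := by
          have := Real.add_one_le_exp (-(t / (a + 1)))
          linarith
        have h5 : Real.exp (-c * t) * Real.exp (-(t / (a + 1))) = Real.exp (-t) := by
          rw [← Real.exp_add]
          congr 1
          rw [hc]; field_simp; ring
        calc Real.exp (-c * t) * (1 - t / (a + 1))
            ≤ Real.exp (-c * t) * Real.exp (-(t / (a + 1))) := by
              apply mul_le_mul_of_nonneg_left h4 (Real.exp_pos _).le
          _ = Real.exp (-t) := h5
      have ht1 : (0:ℝ) ≤ t ^ (a - 1) := Real.rpow_nonneg ht.1 _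
      have : g t = t ^ (a - 1) * (Real.exp (-c * t) * (1 - t / (a + 1))) := by
        simp only [hg, hta, hca]
        ring
      rw [this]
      exact mul_le_mul_of_nonneg_left hkey ht1
  have : (1 / a) * y ^ a * Real.exp (-c * y) = G y - G 0 := by rw [hG0]; simp [hG]
  rw [this, ← hftc]
  exact hmono

theorem mfet_lower_bound_sharp (d : ℕ) (hd : 1 ≤ d) (lam σ x L : ℝ) (hlam : 0 < lam)
    (hσ : 0 < σ) (hx : 0 ≤ x) (hxL : x ≤ L) :
    ((1 + 2 / (d : ℝ)) / (2 * lam * σ ^ 2)) *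
        (Real.exp (2 * lam * L ^ 2 / (d + 2)) - Real.exp (2 * lam * x ^ 2 / (d + 2)))
      ≤ mfet d lam σ x L := by
  have hd0 : (0:ℝ) < (d:ℝ) := by exact_mod_cast hd
  have ha : (0:ℝ) < (d:ℝ) / 2 := by linarith
  set a : ℝ := (d:ℝ) / 2 with haa
  have hd2 : (0:ℝ) < (d:ℝ) + 2 := by linarith
  set f : ℝ → ℝ := fun z =>
    z ^ ((1 : ℝ) - d) * Real.exp (lam * z ^ 2) * lowerGamma a (lam * z ^ 2) with hf
  set h : ℝ → ℝ := fun z =>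
    (2 / d) * lam ^ a * (z * Real.exp (2 * lam * z ^ 2 / (d + 2))) with hh
  -- algebraic identity for z > 0
  have key : ∀ z : ℝ, 0 < z →
      z ^ ((1 : ℝ) - d) * Real.exp (lam * z ^ 2) *
        ((1 / a) * (lam * z ^ 2) ^ a * Real.exp (-(a / (a + 1)) * (lam * z ^ 2))) = h z := by
    intro z hz
    have h1 : (lam * z ^ 2) ^ a = lam ^ a * (z:ℝ) ^ ((d:ℝ)) := by
      rw [Real.mul_rpow hlam.le (by positivity)]
      congr 1
      rw [← Real.rpow_natCast z 2, ← Real.rpow_mul hz.le]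
      congr 1
      rw [haa]; ring
    have h2 : z ^ ((1 : ℝ) - d) * z ^ ((d:ℝ)) = z := by
      rw [← Real.rpow_add hz]
      norm_num
    have h3 : Real.exp (lam * z ^ 2) * Real.exp (-(a / (a + 1)) * (lam * z ^ 2))
        = Real.exp (2 * lam * z ^ 2 / (d + 2)) := by
      rw [← Real.exp_add]
      congr 1
      rw [haa]
      field_simp
      ring
    have h4 : (1 / a) = 2 / (d:ℝ) := by rw [haa]; field_simp
    rw [hh]
    calc z ^ ((1 : ℝ) - d) * Real.exp (lam * z ^ 2) *
          ((1 / a) * (lam * z ^ 2) ^ a * Real.exp (-(a / (a + 1)) * (lam * z ^ 2)))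
        = (1 / a) * lam ^ a * ((z ^ ((1 : ℝ) - d) * z ^ ((d:ℝ))) *
            (Real.exp (lam * z ^ 2) * Real.exp (-(a / (a + 1)) * (lam * z ^ 2)))) := by
          rw [h1]; ring
      _ = (2 / d) * lam ^ a * (z * Real.exp (2 * lam * z ^ 2 / (d + 2))) := by
          rw [h2, h3, h4]
  -- pointwise bound h ≤ f on [x, L]
  have hpt : ∀ z ∈ Icc x L, h z ≤ f z := by
    intro z hz
    rcases eq_or_lt_of_le (hx.trans hz.1) with h0 | h0
    · have : z = 0 := h0.symm
      subst this
      have hl0 : lowerGamma a 0 = 0 := by simp [lowerGamma]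
      have hl0' : lam * (0:ℝ) ^ 2 = 0 := by ring
      simp only [hf, hh, hl0', hl0, mul_zero, zero_mul]
      norm_num
    · have hlg := lowerGamma_ge ha (y := lam * z ^ 2) (by positivity)
      have hnn : (0:ℝ) ≤ z ^ ((1 : ℝ) - d) * Real.exp (lam * z ^ 2) := by positivity
      calc h z = z ^ ((1 : ℝ) - d) * Real.exp (lam * z ^ 2) *
            ((1 / a) * (lam * z ^ 2) ^ a * Real.exp (-(a / (a + 1)) * (lam * z ^ 2))) :=
            (key z h0).symm
        _ ≤ z ^ ((1 : ℝ) - d) * Real.exp (lam * z ^ 2) * lowerGamma a (lam * z ^ 2) :=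
            mul_le_mul_of_nonneg_left hlg hnn
        _ = f z := rfl
  -- f is bounded above by a continuous function on (x, L]
  have hbound : ∀ z ∈ Ioc x L, f z ≤ (2 / d) * lam ^ a * (z * Real.exp (2 * lam * z ^ 2)) := by
    intro z hz
    have h0 : 0 < z := lt_of_le_of_lt hx hz.1
    have hlg := lowerGamma_le ha (y := lam * z ^ 2) (by positivity)
    have hnn : (0:ℝ) ≤ z ^ ((1 : ℝ) - d) * Real.exp (lam * z ^ 2) := by positivity
    have h1 : (lam * z ^ 2) ^ a = lam ^ a * (z:ℝ) ^ ((d:ℝ)) := by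
      rw [Real.mul_rpow hlam.le (by positivity)]
      congr 1
      rw [← Real.rpow_natCast z 2, ← Real.rpow_mul h0.le]
      congr 1
      rw [haa]; ring
    have h2 : z ^ ((1 : ℝ) - d) * z ^ ((d:ℝ)) = z := by
      rw [← Real.rpow_add h0]
      norm_num
    have h4 : (1 / a) = 2 / (d:ℝ) := by rw [haa]; field_simp
    calc f z ≤ z ^ ((1 : ℝ) - d) * Real.exp (lam * z ^ 2) * ((lam * z ^ 2) ^ a / a) :=
          mul_le_mul_of_nonneg_left hlg hnn
      _ = (1/a) * lam ^ a * (z ^ ((1 : ℝ) - d) * z ^ ((d:ℝ))) * Real.exp (lam * z ^ 2) := by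
          rw [h1]; ring
      _ = (2 / d) * lam ^ a * (z * Real.exp (lam * z ^ 2)) := by rw [h2, h4]; ring
      _ ≤ (2 / d) * lam ^ a * (z * Real.exp (2 * lam * z ^ 2)) := by
          have : Real.exp (lam * z ^ 2) ≤ Real.exp (2 * lam * z ^ 2) :=
            Real.exp_le_exp.mpr (by nlinarith)
          have hz0 : (0:ℝ) ≤ z := h0.le
          have hc : (0:ℝ) ≤ (2 / (d:ℝ)) * lam ^ a := by positivity
          exact mul_le_mul_of_nonneg_left (mul_le_mul_of_nonneg_left this hz0) hc
  -- integrability of f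
  have hfmeas : AEStronglyMeasurable f (volume.restrict (Set.uIoc x L)) := by
    apply Measurable.aestronglyMeasurable
    apply Measurable.mul
    apply Measurable.mul
    · exact measurable_id.pow measurable_const
    · exact (measurable_const.mul (measurable_id.pow measurable_const)).exp
    · exact (lowerGamma_continuous ha).measurable.comp
        (measurable_const.mul (measurable_id.pow measurable_const))
  have hfnonneg : ∀ z ∈ Ioc x L, 0 ≤ f z := by
    intro z hz
    have h0 : 0 < z := lt_of_le_of_lt hx hz.1
    have := lowerGamma_nonneg ha (y := lam * z ^ 2) (by positivity)
    positivity
  have hfint : IntervalIntegrable f volume x L := by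
    apply IntervalIntegrable.mono_fun'
      (g := fun z => (2 / d) * lam ^ a * (z * Real.exp (2 * lam * z ^ 2)))
    · apply ContinuousOn.intervalIntegrable
      apply Continuous.continuousOn
      fun_prop
    · exact hfmeas
    · rw [Filter.EventuallyLE, ae_restrict_iff' measurableSet_uIoc]
      apply Filter.Eventually.of_forall
      intro z hz
      rw [Set.uIoc_of_le hxL] at hz
      rw [Real.norm_eq_abs, abs_of_nonneg (hfnonneg z hz)]
      exact hbound z hz
  have hhint : IntervalIntegrable h volume x L := by
    apply ContinuousOn.intervalIntegrable
    apply Continuous.continuousOn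
    rw [hh]
    fun_prop
  -- integral comparison
  have hcomp : ∫ z in x..L, h z ≤ ∫ z in x..L, f z :=
    intervalIntegral.integral_mono_on hxL hhint hfint hpt
  -- compute ∫ h
  have hFTC : ∫ z in x..L, z * Real.exp (2 * lam * z ^ 2 / (d + 2))
      = (d + 2) / (4 * lam) * Real.exp (2 * lam * L ^ 2 / (d + 2))
        - (d + 2) / (4 * lam) * Real.exp (2 * lam * x ^ 2 / (d + 2)) := by
    have : ∀ z ∈ Set.uIcc x L, HasDerivAt
        (fun z => (d + 2) / (4 * lam) * Real.exp (2 * lam * z ^ 2 / (d + 2)))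
        (z * Real.exp (2 * lam * z ^ 2 / (d + 2))) z := by
      intro z _
      have h1 : HasDerivAt (fun z : ℝ => 2 * lam * z ^ 2 / (d + 2))
          (2 * lam * (2 * z) / (d + 2)) z := by
        have := ((hasDerivAt_pow 2 z).const_mul (2 * lam)).div_const ((d:ℝ) + 2)
        simpa using this
      have h2 := (h1.exp).const_mul ((d + 2) / (4 * lam))
      refine h2.congr_deriv ?_
      field_simp
      ring
    rw [intervalIntegral.integral_eq_sub_of_hasDerivAt this
      (by apply ContinuousOn.intervalIntegrable; apply Continuous.continuousOn; fun_prop)]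
  have hInth : ∫ z in x..L, h z = (2 / d) * lam ^ a * ((d + 2) / (4 * lam) *
      (Real.exp (2 * lam * L ^ 2 / (d + 2)) - Real.exp (2 * lam * x ^ 2 / (d + 2)))) := by
    rw [hh]
    rw [intervalIntegral.integral_const_mul, hFTC]
    ring
  -- conclusion
  have hlampos : (0:ℝ) < lam ^ a := Real.rpow_pos_of_pos hlam a
  have hcpos : (0:ℝ) < 1 / (lam ^ a * σ ^ 2) := by positivity
  have hmain : (1 / (lam ^ a * σ ^ 2)) * ∫ z in x..L, h z ≤ mfet d lam σ x L := by
    rw [mfet]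
    exact mul_le_mul_of_nonneg_left hcomp hcpos.le
  have heq : (1 / (lam ^ a * σ ^ 2)) * ∫ z in x..L, h z
      = ((1 + 2 / (d : ℝ)) / (2 * lam * σ ^ 2)) *
        (Real.exp (2 * lam * L ^ 2 / (d + 2)) - Real.exp (2 * lam * x ^ 2 / (d + 2))) := by
    rw [hInth]
    field_simp
    ring
  linarith [hmain, heq.ge, heq.le]
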